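/- If f and g are Riesz homomorphisms (lattice homomorphisms) from a Riesz space X to the reals, then the kernel of f - g is a Riesz subspace of X, i.e., it is closed under finite suprema and infima. -/
import Mathlib

theorem stmt0 {X : Type*} [Lattice X] [AddCommGroup X] [Module ℝ X]
    [CovariantClass X X (· + ·) (· ≤ ·)]
    (f g : X →ₗ[ℝ] ℝ)
    (hf : ∀ x y : X, f (x ⊔ y) = f x ⊔ f y)
    (hg : ∀ x y : X, g (x ⊔ y) = g x ⊔ g y)
    (x y : X) (hx : f x = g x) (hy : f y = g y) :
    f (x ⊔ y) = g (x ⊔ y) ∧ f (x ⊓ y) = g (x ⊓ y) := by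
  have hsup : f (x ⊔ y) = g (x ⊔ y) := by rw [hf, hg, hx, hy]
  refine ⟨hsup, ?_⟩
  have h : x ⊓ y = x + y - (x ⊔ y) := by
    rw [eq_sub_iff_add_eq, inf_add_sup]
  rw [h, map_sub, map_add, map_sub, map_add, hx, hy, hsup]
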